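/- The POD projection error identity: with reduced space V_N = span{ζ_1,…,ζ_N} built from the first N POD modes of snapshots v_1,…,v_M in a Hilbert space, the sum of squared best-approximation errors satisfies (1/M) Σ_{m=1}^{M} min_{z ∈ V_N} ‖v_m − z‖² = Σ_{n=N+1}^{M} θ_n, where θ_1 ≥ θ_2 ≥ … ≥ θ_M ≥ 0 are the eigenvalues of the correlation matrix C_{ml} = (1/M)(v_m, v_l). -/

import Mathlib

open Matrix
open scoped BigOperators RealInnerProductSpace

/-- the POD projection error identity. With the reduced space
`V_N = span{ζ_1,…,ζ_N}` built from the first `N` POD modes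
`ζ_n = (M θ_n)^{-1/2} Σ_m (x_n)_m v_m` of the snapshots `v_1,…,v_M`, where
`x_n, θ_n` are the orthonormal eigenvectors and decreasingly sorted eigenvalues of
the correlation matrix `C_{ml} = (1/M) ⟪v_m, v_l⟫`, the sum of squared
best-approximation errors satisfies
`(1/M) Σ_m min_{z ∈ V_N} ‖v_m − z‖² = Σ_{n > N} θ_n`. -/
theorem pod_projection_error_identity
    (𝒴 : Type*) [NormedAddCommGroup 𝒴] [InnerProductSpace ℝ 𝒴] [CompleteSpace 𝒴]
    (M N : ℕ) [NeZero M] (hNM : N ≤ M)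
    (v : Fin M → 𝒴)
    (C : Matrix (Fin M) (Fin M) ℝ)
    (hC : ∀ m l, C m l = (1 / (M : ℝ)) * ⟪v m, v l⟫)
    (x : Fin M → Fin M → ℝ) (θ : Fin M → ℝ)
    (horth : ∀ n k, x n ⬝ᵥ x k = if n = k then (1 : ℝ) else 0)
    (heig : ∀ n, C.mulVec (x n) = θ n • x n)
    (hsort : Antitone θ) (hnonneg : ∀ n, 0 ≤ θ n)
    (ζ : Fin M → 𝒴)
    (hζ : ∀ n, ζ n = (Real.sqrt ((M : ℝ) * θ n))⁻¹ • ∑ m, x n m • v m)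
    (VN : Submodule ℝ 𝒴)
    (hVN : VN = Submodule.span ℝ (ζ '' {n : Fin M | (n : ℕ) < N})) :
    (1 / (M : ℝ)) * ∑ m, sInf {r : ℝ | ∃ z ∈ VN, r = ‖v m - z‖ ^ 2}
      = ∑ n ∈ Finset.univ.filter (fun n : Fin M => N ≤ (n : ℕ)), θ n := by
  have hM : (M : ℝ) ≠ 0 := Nat.cast_ne_zero.mpr (NeZero.ne M)
  set w : Fin M → 𝒴 := fun n => ∑ m, x n m • v m with hw_def
  have hvv : ∀ m l, ⟪v m, v l⟫ = (M : ℝ) * C m l := by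
    intro m l; rw [hC]; field_simp
  -- inner products of the w's
  have hww : ∀ n k, ⟪w n, w k⟫ = if n = k then (M : ℝ) * θ n else 0 := by
    intro n k
    have h1 : ⟪w n, w k⟫ = ∑ m, x n m * ∑ l, x k l * ⟪v m, v l⟫ := by
      simp only [hw_def]
      rw [sum_inner]
      refine Finset.sum_congr rfl fun m _ => ?_
      rw [real_inner_smul_left, inner_sum]
      congr 1
      refine Finset.sum_congr rfl fun l _ => ?_
      rw [real_inner_smul_right]
    have h2 : ∀ m, ∑ l, x k l * ⟪v m, v l⟫ = (M : ℝ) * (θ k * x k m) := by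
      intro m
      have he := congrFun (heig k) m
      simp only [Matrix.mulVec, dotProduct, Pi.smul_apply, smul_eq_mul] at he
      calc ∑ l, x k l * ⟪v m, v l⟫ = (M : ℝ) * ∑ l, C m l * x k l := by
            rw [Finset.mul_sum]; refine Finset.sum_congr rfl fun l _ => ?_
            rw [hvv]; ring
        _ = (M : ℝ) * (θ k * x k m) := by rw [he]
    have h3 : ∑ m, x n m * ((M : ℝ) * (θ k * x k m)) = (M : ℝ) * θ k * (x n ⬝ᵥ x k) := by
      simp only [dotProduct, Finset.mul_sum]
      refine Finset.sum_congr rfl fun m _ => ?_; ring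
    rw [h1]
    simp only [h2]
    rw [h3, horth]
    by_cases h : n = k <;> simp [h]
  -- the w's with index < N lie in VN
  have hwmem : ∀ n : Fin M, (n : ℕ) < N → w n ∈ VN := by
    intro n hn
    by_cases hθ : θ n = 0
    · have h0 : ⟪w n, w n⟫ = 0 := by rw [hww]; simp [hθ]
      have : w n = 0 := by
        have := real_inner_self_eq_norm_sq (w n)
        rw [h0] at this
        have hnorm : ‖w n‖ = 0 := by nlinarith [norm_nonneg (w n)]
        exact norm_eq_zero.mp hnorm
      rw [this]; exact VN.zero_mem
    · have hpos : 0 < (M : ℝ) * θ n := by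
        have h1 : 0 < θ n := lt_of_le_of_ne (hnonneg n) (Ne.symm hθ)
        have h2 : 0 < (M : ℝ) := by positivity
        positivity
      have hs : Real.sqrt ((M : ℝ) * θ n) ≠ 0 := by positivity
      have hζn : ζ n ∈ VN := by
        rw [hVN]; exact Submodule.subset_span ⟨n, hn, rfl⟩
      have hwn : w n = Real.sqrt ((M : ℝ) * θ n) • ζ n := by
        rw [hζ, smul_smul, mul_inv_cancel₀ hs, one_smul]
      rw [hwn]; exact VN.smul_mem _ hζn
  -- column orthonormality
  have hXTX : ∀ m l, ∑ n, x n m * x n l = if m = l then (1 : ℝ) else 0 := by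
    have h1 : (Matrix.of x) * (Matrix.of x)ᵀ = 1 := by
      ext n k
      simpa [Matrix.mul_apply, Matrix.one_apply, dotProduct] using horth n k
    have h2 : (Matrix.of x)ᵀ * (Matrix.of x) = 1 := mul_eq_one_comm.mp h1
    intro m l
    have := congrFun (congrFun h2 m) l
    simpa [Matrix.mul_apply, Matrix.one_apply] using this
  -- decomposition of v
  have hdecomp : ∀ m, v m = ∑ n, x n m • w n := by
    intro m
    calc v m = ∑ l, (if m = l then (1 : ℝ) else 0) • v l := by simp
      _ = ∑ l, (∑ n, x n m * x n l) • v l := by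
          refine Finset.sum_congr rfl fun l _ => ?_; rw [hXTX]
      _ = ∑ l, ∑ n, (x n m * x n l) • v l := by
          refine Finset.sum_congr rfl fun l _ => ?_; rw [Finset.sum_smul]
      _ = ∑ n, ∑ l, (x n m * x n l) • v l := Finset.sum_comm
      _ = ∑ n, x n m • w n := by
          refine Finset.sum_congr rfl fun n _ => ?_
          simp [hw_def, Finset.smul_sum, smul_smul]
  set F : Finset (Fin M) := Finset.univ.filter (fun n : Fin M => N ≤ (n : ℕ)) with hF_def
  set G : Finset (Fin M) := Finset.univ.filter (fun n : Fin M => (n : ℕ) < N) with hG_def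
  set p : Fin M → 𝒴 := fun m => ∑ n ∈ G, x n m • w n with hp_def
  set r : Fin M → 𝒴 := fun m => ∑ n ∈ F, x n m • w n with hr_def
  have hsplit : ∀ m, v m = p m + r m := by
    intro m
    rw [hdecomp m, hp_def, hr_def]
    rw [← Finset.sum_filter_add_sum_filter_not Finset.univ (fun n : Fin M => (n : ℕ) < N)]
    congr 1
    apply Finset.sum_congr _ fun _ _ => rfl
    simp [hF_def, Finset.filter_congr_decidable, not_lt]
  have hpmem : ∀ m, p m ∈ VN := by
    intro m
    refine Submodule.sum_mem _ fun n hn => ?_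
    refine VN.smul_mem _ (hwmem n ?_)
    simpa [hG_def] using hn
  -- r m is orthogonal to VN
  have hrw : ∀ (m : Fin M) (k : Fin M), (k : ℕ) < N → ⟪r m, w k⟫ = 0 := by
    intro m k hk
    rw [hr_def]
    rw [sum_inner]
    refine Finset.sum_eq_zero fun n hn => ?_
    have hnN : N ≤ (n : ℕ) := by simpa [hF_def] using hn
    have hnk : n ≠ k := by
      intro h; rw [h] at hnN; omega
    rw [real_inner_smul_left, hww, if_neg hnk, mul_zero]
  have hro : ∀ m, ∀ z ∈ VN, ⟪r m, z⟫ = 0 := by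
    intro m z hz
    rw [hVN] at hz
    induction hz using Submodule.span_induction with
    | mem y hy =>
        obtain ⟨k, hk, rfl⟩ := hy
        rw [hζ, real_inner_smul_right]
        have : (∑ l, x k l • v l) = w k := rfl
        rw [this, hrw m k (by simpa using hk), mul_zero]
    | zero => simp
    | add a b _ _ ha hb => rw [inner_add_right, ha, hb, add_zero]
    | smul c a _ ha => rw [real_inner_smul_right, ha, mul_zero]
  -- the infimum is ‖r m‖²
  have hmin : ∀ m, sInf {t : ℝ | ∃ z ∈ VN, t = ‖v m - z‖ ^ 2} = ‖r m‖ ^ 2 := by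
    intro m
    have hvm : v m - p m = r m := by rw [hsplit m]; abel
    apply le_antisymm
    · apply csInf_le
      · refine ⟨0, fun t ht => ?_⟩
        obtain ⟨z, _, rfl⟩ := ht; positivity
      · exact ⟨p m, hpmem m, by rw [hvm]⟩
    · refine le_csInf ⟨‖v m - p m‖ ^ 2, p m, hpmem m, rfl⟩ ?_
      rintro t ⟨z, hz, rfl⟩
      have h1 : v m - z = r m + (p m - z) := by rw [← hvm]; abel
      rw [h1, norm_add_sq_real, hro m (p m - z) (VN.sub_mem (hpmem m) hz), mul_zero, add_zero]
      nlinarith [sq_nonneg ‖p m - z‖]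
  -- compute ‖r m‖²
  have hr2 : ∀ m, ‖r m‖ ^ 2 = ∑ n ∈ F, x n m ^ 2 * ((M : ℝ) * θ n) := by
    intro m
    rw [← real_inner_self_eq_norm_sq, hr_def]
    rw [sum_inner]
    refine Finset.sum_congr rfl fun n hn => ?_
    rw [real_inner_smul_left, inner_sum]
    have : ∑ k ∈ F, ⟪w n, x k m • w k⟫ = x n m * ((M : ℝ) * θ n) := by
      rw [Finset.sum_eq_single n]
      · rw [real_inner_smul_right, hww, if_pos rfl]
      · intro k _ hkn
        rw [real_inner_smul_right, hww, if_neg (Ne.symm hkn), mul_zero]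
      · intro h; exact absurd hn h
    rw [this]; ring
  -- final computation
  have hsum : ∑ m, sInf {t : ℝ | ∃ z ∈ VN, t = ‖v m - z‖ ^ 2}
      = ∑ n ∈ F, (M : ℝ) * θ n := by
    calc ∑ m, sInf {t : ℝ | ∃ z ∈ VN, t = ‖v m - z‖ ^ 2}
        = ∑ m, ∑ n ∈ F, x n m ^ 2 * ((M : ℝ) * θ n) := by
          refine Finset.sum_congr rfl fun m _ => ?_
          rw [hmin m, hr2 m]
      _ = ∑ n ∈ F, ∑ m, x n m ^ 2 * ((M : ℝ) * θ n) := Finset.sum_comm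
      _ = ∑ n ∈ F, (M : ℝ) * θ n := by
          refine Finset.sum_congr rfl fun n _ => ?_
          rw [← Finset.sum_mul]
          have : ∑ m, x n m ^ 2 = 1 := by
            have h1 := horth n n
            simpa [dotProduct, pow_two] using h1
          rw [this, one_mul]
  rw [hsum, Finset.mul_sum]
  refine Finset.sum_congr rfl fun n _ => ?_
  field_simp
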